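/- Radau reconstruction: on a single interval $(a,b)$, for any polynomial $\varphi$ of degree $\le q$ on $(a,b)$ together with a prescribed left value $\varphi_{-}\in\mathbb{R}$ (defining the jump $[\varphi]=\varphi(a^+)-\varphi_{-}$), there exists a unique polynomial $\mathcal I\varphi$ of degree $\le q+1$ with $\mathcal I\varphi(a) = \varphi_{-}$ and $\int_a^b \partial_t(\mathcal I\varphi)\,\phi = \int_a^b \partial_t\varphi\,\phi + [\varphi]\,\phi(a^+)$ for all polynomials $\phi$ of degree $\le q$. -/

import Mathlib

open Polynomial intervalIntegral MeasureTheory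

private lemma radau_intble (f g : ℝ → ℝ) (hf : Continuous f) (hg : Continuous g) (a b : ℝ) :
    IntervalIntegrable (fun x => f x * g x) MeasureTheory.volume a b :=
  (hf.mul hg).intervalIntegrable a b

/-- Expansion in monomials. -/
private lemma radau_expand {a b J : ℝ} {f : ℝ → ℝ} (hf : Continuous f) {q : ℕ}
    (h : ∀ i : ℕ, i ≤ q → ∫ x in a..b, f x * x ^ i = J * a ^ i)
    {ψ : Polynomial ℝ} (hψ : ψ.natDegree ≤ q) :
    ∫ x in a..b, f x * ψ.eval x = J * ψ.eval a := by
  have hev : ∀ x : ℝ, ψ.eval x = ∑ i ∈ Finset.range (q + 1), ψ.coeff i * x ^ i := by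
    intro x
    conv_lhs => rw [ψ.as_sum_range' (q + 1) (Nat.lt_succ_of_le hψ)]
    simp [Polynomial.eval_finset_sum]
  have h1 : (∫ x in a..b, f x * ψ.eval x)
      = ∫ x in a..b, ∑ i ∈ Finset.range (q + 1), ψ.coeff i * (f x * x ^ i) := by
    apply intervalIntegral.integral_congr
    intro x _
    show f x * ψ.eval x = ∑ i ∈ Finset.range (q + 1), ψ.coeff i * (f x * x ^ i)
    rw [hev x, Finset.mul_sum]
    exact Finset.sum_congr rfl fun i _ => by ring
  rw [h1, intervalIntegral.integral_finset_sum]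
  · have : ∀ i ∈ Finset.range (q + 1),
        (∫ x in a..b, ψ.coeff i * (f x * x ^ i)) = ψ.coeff i * (J * a ^ i) := by
      intro i hi
      rw [intervalIntegral.integral_const_mul, h i (Nat.lt_succ_iff.mp (Finset.mem_range.mp hi))]
    rw [Finset.sum_congr rfl this, hev a, Finset.mul_sum]
    exact Finset.sum_congr rfl fun i _ => by ring
  · intro i _
    exact (continuous_const.mul (hf.mul (continuous_pow i))).intervalIntegrable a b

/-- A polynomial whose square integrates to zero over a nondegenerate interval is zero. -/
private lemma radau_sq_zero {a b : ℝ} (hab : a < b) {p : Polynomial ℝ}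
    (h : (∫ x in a..b, p.eval x * p.eval x) = 0) : p = 0 := by
  by_contra hp
  have hpos : 0 < ∫ x in a..b, p.eval x * p.eval x := by
    apply intervalIntegral.integral_pos hab
    · exact ((p.continuous_aeval).mul (p.continuous_aeval)).continuousOn
    · intro x _; exact mul_self_nonneg _
    · have hinf : (Set.Icc a b \ {x | p.IsRoot x}).Infinite :=
        (Set.Icc_infinite hab).diff (p.finite_setOf_isRoot hp)
      obtain ⟨c, hc⟩ := hinf.nonempty
      exact ⟨c, hc.1, mul_self_pos.mpr hc.2⟩
  exact hpos.ne' h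

theorem radau_reconstruction_exists_unique
    (q : ℕ) (a b : ℝ) (hab : a < b)
    (φ : Polynomial ℝ) (hφ : φ.natDegree ≤ q) (φminus : ℝ) :
    ∃! I : Polynomial ℝ, I.natDegree ≤ q + 1 ∧ I.eval a = φminus ∧
      ∀ ψ : Polynomial ℝ, ψ.natDegree ≤ q →
        ∫ x in a..b, (Polynomial.derivative I).eval x * ψ.eval x
          = (∫ x in a..b, (Polynomial.derivative φ).eval x * ψ.eval x)
            + (φ.eval a - φminus) * ψ.eval a := by
  classical
  set J : ℝ := φ.eval a - φminus with hJ
  -- the linear functionals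
  have hcont : ∀ p : Polynomial ℝ, Continuous fun x : ℝ => p.eval x := fun p => p.continuous_aeval
  set intL : Fin (q + 1) → (Polynomial ℝ →ₗ[ℝ] ℝ) := fun j =>
    { toFun := fun p => ∫ x in a..b, (Polynomial.derivative p).eval x * x ^ (j : ℕ)
      map_add' := by
        intro p r
        simp only [map_add, Polynomial.eval_add, add_mul]
        exact intervalIntegral.integral_add
          (radau_intble _ _ (hcont _) (continuous_pow _) a b)
          (radau_intble _ _ (hcont _) (continuous_pow _) a b)
      map_smul' := by
        intro c p
        simp only [Polynomial.derivative_smul, Polynomial.eval_smul, smul_eq_mul, RingHom.id_apply, mul_assoc]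
        exact intervalIntegral.integral_const_mul c _ } with hintL
  set F : Fin (q + 2) → (Polynomial ℝ →ₗ[ℝ] ℝ) :=
    Fin.cases (Polynomial.leval a) intL with hF
  set T : Polynomial.degreeLT ℝ (q + 2) →ₗ[ℝ] (Fin (q + 2) → ℝ) :=
    (LinearMap.pi F).comp (Polynomial.degreeLT ℝ (q + 2)).subtype with hT
  -- basic degree facts
  have hdegmem : ∀ p : Polynomial ℝ, p ∈ Polynomial.degreeLT ℝ (q + 2) ↔ p.natDegree ≤ q + 1 := by
    intro p
    rw [Polynomial.mem_degreeLT]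
    rcases eq_or_ne p 0 with rfl | hp
    · simp [Polynomial.degree_zero]
      exact WithBot.bot_lt_coe _
    · rw [← Polynomial.natDegree_lt_iff_degree_lt hp, Nat.lt_succ_iff]
  have hderivdeg : ∀ p : Polynomial ℝ, p.natDegree ≤ q + 1 →
      (Polynomial.derivative p).natDegree ≤ q := by
    intro p hp
    exact le_trans (Polynomial.natDegree_derivative_le p) (by omega)
  -- injectivity of T
  have hinj : Function.Injective T := by
    rw [← LinearMap.ker_eq_bot, Submodule.eq_bot_iff]
    rintro ⟨p, hpmem⟩ hp0
    have hker : T ⟨p, hpmem⟩ = 0 := hp0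
    have hcomp : ∀ i : Fin (q + 2), F i p = 0 := by
      intro i
      have h2 := congrFun hker i
      simpa [hT, LinearMap.pi_apply] using h2
    have hmono : ∀ i : ℕ, i ≤ q →
        (∫ x in a..b, (Polynomial.derivative p).eval x * x ^ i) = (0 : ℝ) * a ^ i := by
      intro i hi
      have := hcomp (Fin.succ ⟨i, Nat.lt_succ_of_le hi⟩)
      simpa [hF, hintL] using this
    have hdd : (Polynomial.derivative p).natDegree ≤ q :=
      hderivdeg p ((hdegmem p).mp hpmem)
    have hzero : (∫ x in a..b,
        (Polynomial.derivative p).eval x * (Polynomial.derivative p).eval x) = 0 := by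
      have := radau_expand (hcont (Polynomial.derivative p)) hmono hdd
      simpa using this
    have hd0 : Polynomial.derivative p = 0 := radau_sq_zero hab hzero
    have hnat : p.natDegree = 0 := Polynomial.natDegree_eq_zero_of_derivative_eq_zero hd0
    have hpa : p.eval a = 0 := by
      have := hcomp 0
      simpa [hF, Polynomial.leval_apply] using this
    have hC : p = Polynomial.C (p.coeff 0) := Polynomial.eq_C_of_natDegree_eq_zero hnat
    have hc0 : p.coeff 0 = 0 := by rw [hC] at hpa; simpa using hpa
    have hp : p = 0 := by rw [hC, hc0, map_zero]
    exact Subtype.ext hp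
  -- surjectivity
  haveI : FiniteDimensional ℝ (Polynomial.degreeLT ℝ (q + 2)) :=
    Module.Finite.equiv (Polynomial.degreeLTEquiv ℝ (q + 2)).symm
  have hfr : Module.finrank ℝ (Polynomial.degreeLT ℝ (q + 2))
      = Module.finrank ℝ (Fin (q + 2) → ℝ) := by
    rw [(Polynomial.degreeLTEquiv ℝ (q + 2)).finrank_eq, Module.finrank_fin_fun]
  have hsurj : Function.Surjective T :=
    (LinearMap.injective_iff_surjective_of_finrank_eq_finrank hfr).mp hinj
  -- target vector
  set w : Fin (q + 2) → ℝ := Fin.cons φminus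
    (fun j => (∫ x in a..b, (Polynomial.derivative φ).eval x * x ^ (j : ℕ)) + J * a ^ (j : ℕ))
    with hw
  obtain ⟨⟨I, hImem⟩, hTI⟩ := hsurj w
  have hIdeg : I.natDegree ≤ q + 1 := (hdegmem I).mp hImem
  have hIa : I.eval a = φminus := by
    have := congrFun hTI 0
    simpa [hT, hF, hw, LinearMap.pi_apply] using this
  have hImono : ∀ i : ℕ, i ≤ q →
      (∫ x in a..b, (Polynomial.derivative I).eval x * x ^ i)
        = (∫ x in a..b, (Polynomial.derivative φ).eval x * x ^ i) + J * a ^ i := by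
    intro i hi
    have := congrFun hTI (Fin.succ ⟨i, Nat.lt_succ_of_le hi⟩)
    rw [hw, Fin.cons_succ] at this
    simpa [hT, hF, hw, hintL, LinearMap.pi_apply] using this
  -- the difference of derivatives satisfies the monomial identities
  have hprop : ∀ ψ : Polynomial ℝ, ψ.natDegree ≤ q →
      ∫ x in a..b, (Polynomial.derivative I).eval x * ψ.eval x
        = (∫ x in a..b, (Polynomial.derivative φ).eval x * ψ.eval x) + J * ψ.eval a := by
    intro ψ hψ
    have hfC : Continuous fun x : ℝ =>
        (Polynomial.derivative I).eval x - (Polynomial.derivative φ).eval x :=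
      (hcont _).sub (hcont _)
    have hmono : ∀ i : ℕ, i ≤ q →
        (∫ x in a..b, ((Polynomial.derivative I).eval x - (Polynomial.derivative φ).eval x) * x ^ i)
          = J * a ^ i := by
      intro i hi
      have hsplit : (∫ x in a..b,
          ((Polynomial.derivative I).eval x - (Polynomial.derivative φ).eval x) * x ^ i)
          = (∫ x in a..b, (Polynomial.derivative I).eval x * x ^ i)
            - ∫ x in a..b, (Polynomial.derivative φ).eval x * x ^ i := by
        rw [← intervalIntegral.integral_sub
          (radau_intble _ _ (hcont _) (continuous_pow i) a b)
          (radau_intble _ _ (hcont _) (continuous_pow i) a b)]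
        apply intervalIntegral.integral_congr
        intro x _; ring
      rw [hsplit, hImono i hi]; ring
    have := radau_expand hfC hmono hψ
    have hsplit : (∫ x in a..b,
        ((Polynomial.derivative I).eval x - (Polynomial.derivative φ).eval x) * ψ.eval x)
        = (∫ x in a..b, (Polynomial.derivative I).eval x * ψ.eval x)
          - ∫ x in a..b, (Polynomial.derivative φ).eval x * ψ.eval x := by
      rw [← intervalIntegral.integral_sub
        (radau_intble _ _ (hcont _) (hcont ψ) a b)
        (radau_intble _ _ (hcont _) (hcont ψ) a b)]
      apply intervalIntegral.integral_congr
      intro x _; ring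
    rw [hsplit] at this
    linarith
  refine ⟨I, ⟨hIdeg, hIa, hprop⟩, ?_⟩
  -- uniqueness
  rintro I' ⟨hI'deg, hI'a, hI'prop⟩
  set D : Polynomial ℝ := I' - I with hD
  have hDa : D.eval a = 0 := by simp [hD, hI'a, hIa]
  have hDdeg : D.natDegree ≤ q + 1 :=
    le_trans (Polynomial.natDegree_sub_le I' I) (max_le hI'deg hIdeg)
  have hDderiv : (Polynomial.derivative D).natDegree ≤ q := hderivdeg D hDdeg
  have hDzero : ∀ ψ : Polynomial ℝ, ψ.natDegree ≤ q →
      (∫ x in a..b, (Polynomial.derivative D).eval x * ψ.eval x) = 0 := by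
    intro ψ hψ
    have hsplit : (∫ x in a..b, (Polynomial.derivative D).eval x * ψ.eval x)
        = (∫ x in a..b, (Polynomial.derivative I').eval x * ψ.eval x)
          - ∫ x in a..b, (Polynomial.derivative I).eval x * ψ.eval x := by
      rw [← intervalIntegral.integral_sub
        (radau_intble _ _ (hcont _) (hcont ψ) a b)
        (radau_intble _ _ (hcont _) (hcont ψ) a b)]
      apply intervalIntegral.integral_congr
      intro x _
      simp [hD, map_sub]
      ring
    rw [hsplit, hI'prop ψ hψ, hprop ψ hψ]
    ring
  have hsq := hDzero (Polynomial.derivative D) hDderiv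
  have hd0 : Polynomial.derivative D = 0 := radau_sq_zero hab hsq
  have hnat : D.natDegree = 0 := Polynomial.natDegree_eq_zero_of_derivative_eq_zero hd0
  have hDC : D = Polynomial.C (D.coeff 0) := Polynomial.eq_C_of_natDegree_eq_zero hnat
  have : D = 0 := by
    rw [hDC] at hDa ⊢
    simp at hDa
    simp [hDa]
  have := sub_eq_zero.mp (hD ▸ this)
  exact this
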